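/- Fix r > 0. The map φ₊(z) := ((z₁/ρ₊, z₂/ρ₊), (ρ₊·z₃, ρ₊·z₄)), where ρ₊ := √(|z₁|² + |z₂|²), is a homeomorphism from M_r onto S³ × ℂ², where S³ := {w ∈ ℂ² : |w₁|² + |w₂|² = 1}. Symmetrically, the map φ₋(z) := ((ρ₋·z₁, ρ₋·z₂), (z₃/ρ₋, z₄/ρ₋)), where ρ₋ := √(|z₃|² + |z₄|²), is a homeomorphism from M_{−r} onto ℂ² × S³. -/

import Mathlib

/-- `M_r = {z ∈ ℂ⁴ : |z₁|² + |z₂|² − |z₃|² − |z₄|² = r}`. -/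
def Mslice (r : ℝ) : Set (Fin 4 → ℂ) :=
  {z | ‖z 0‖ ^ 2 + ‖z 1‖ ^ 2 - ‖z 2‖ ^ 2 - ‖z 3‖ ^ 2 = r}

/-- `S³ = {w ∈ ℂ² : |w₁|² + |w₂|² = 1}`. -/
def S3c : Set (Fin 2 → ℂ) := {w | ‖w 0‖ ^ 2 + ‖w 1‖ ^ 2 = 1}

noncomputable section

namespace AuxStmt12

/-- ρ(z) = √(|z₀|²+|z₁|²) -/
def rho (z : Fin 4 → ℂ) : ℝ := Real.sqrt (‖z 0‖ ^ 2 + ‖z 1‖ ^ 2)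

/-- s(v) = √((r + √(r²+4|v|²))/2) -/
def sfun (r : ℝ) (v : Fin 2 → ℂ) : ℝ :=
  Real.sqrt ((r + Real.sqrt (r ^ 2 + 4 * (‖v 0‖ ^ 2 + ‖v 1‖ ^ 2))) / 2)

lemma rho_sq (z : Fin 4 → ℂ) : rho z ^ 2 = ‖z 0‖ ^ 2 + ‖z 1‖ ^ 2 :=
  Real.sq_sqrt (by positivity)

lemma rho_pos {r : ℝ} (hr : 0 < r) {z : Fin 4 → ℂ} (hz : z ∈ Mslice r) : 0 < rho z := by
  have hz' : ‖z 0‖ ^ 2 + ‖z 1‖ ^ 2 - ‖z 2‖ ^ 2 - ‖z 3‖ ^ 2 = r := hz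
  apply Real.sqrt_pos.2
  nlinarith [sq_nonneg ‖z 2‖, sq_nonneg ‖z 3‖]

lemma sfun_pos {r : ℝ} (hr : 0 < r) (v : Fin 2 → ℂ) : 0 < sfun r v := by
  apply Real.sqrt_pos.2
  have h1 : (0:ℝ) ≤ Real.sqrt (r ^ 2 + 4 * (‖v 0‖ ^ 2 + ‖v 1‖ ^ 2)) := Real.sqrt_nonneg _
  linarith

lemma sfun_spec {r : ℝ} (hr : 0 < r) (v : Fin 2 → ℂ) :
    sfun r v ^ 4 = r * sfun r v ^ 2 + (‖v 0‖ ^ 2 + ‖v 1‖ ^ 2) := by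
  have ha : (0:ℝ) ≤ ‖v 0‖ ^ 2 + ‖v 1‖ ^ 2 := by positivity
  have hq : Real.sqrt (r ^ 2 + 4 * (‖v 0‖ ^ 2 + ‖v 1‖ ^ 2)) ^ 2
      = r ^ 2 + 4 * (‖v 0‖ ^ 2 + ‖v 1‖ ^ 2) := Real.sq_sqrt (by positivity)
  have hs2 : sfun r v ^ 2
      = (r + Real.sqrt (r ^ 2 + 4 * (‖v 0‖ ^ 2 + ‖v 1‖ ^ 2))) / 2 := by
    apply Real.sq_sqrt
    have := Real.sqrt_nonneg (r ^ 2 + 4 * (‖v 0‖ ^ 2 + ‖v 1‖ ^ 2))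
    linarith
  have h4 : sfun r v ^ 4 = (sfun r v ^ 2) ^ 2 := by ring
  rw [h4, hs2]
  nlinarith [hq]

lemma sfun_ge {r : ℝ} (hr : 0 < r) (v : Fin 2 → ℂ) : r ≤ sfun r v ^ 2 := by
  have h := sfun_spec hr v
  have hs := sfun_pos hr v
  have ha : (0:ℝ) ≤ ‖v 0‖ ^ 2 + ‖v 1‖ ^ 2 := by positivity
  nlinarith [sq_nonneg (sfun r v), pow_pos hs 2]

lemma memS {r : ℝ} (hr : 0 < r) (z : ↥(Mslice r)) :
    (![z.1 0 / (rho z.1 : ℂ), z.1 1 / (rho z.1 : ℂ)] : Fin 2 → ℂ) ∈ S3c := by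
  have hρ := rho_pos hr z.2
  have hρ2 := rho_sq z.1
  show ‖z.1 0 / (rho z.1 : ℂ)‖ ^ 2 + ‖z.1 1 / (rho z.1 : ℂ)‖ ^ 2 = 1
  rw [norm_div, norm_div, Complex.norm_real, Real.norm_of_nonneg hρ.le]
  field_simp
  linarith [hρ2]

lemma memM {r : ℝ} (hr : 0 < r) (p : ↥S3c × (Fin 2 → ℂ)) :
    (![((sfun r p.2 : ℝ) : ℂ) * p.1.1 0, ((sfun r p.2 : ℝ) : ℂ) * p.1.1 1,
       p.2 0 / ((sfun r p.2 : ℝ) : ℂ), p.2 1 / ((sfun r p.2 : ℝ) : ℂ)] : Fin 4 → ℂ)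
      ∈ Mslice r := by
  have hs := sfun_pos hr p.2
  have hspec := sfun_spec hr p.2
  have hw : ‖p.1.1 0‖ ^ 2 + ‖p.1.1 1‖ ^ 2 = 1 := p.1.2
  show ‖((sfun r p.2 : ℝ) : ℂ) * p.1.1 0‖ ^ 2 + ‖((sfun r p.2 : ℝ) : ℂ) * p.1.1 1‖ ^ 2
      - ‖p.2 0 / ((sfun r p.2 : ℝ) : ℂ)‖ ^ 2 - ‖p.2 1 / ((sfun r p.2 : ℝ) : ℂ)‖ ^ 2 = r
  rw [norm_mul, norm_mul, norm_div, norm_div, Complex.norm_real, Real.norm_of_nonneg hs.le]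
  field_simp
  nlinarith [hspec, hw, hs, pow_pos hs 2, pow_pos hs 4]

def Fmap (r : ℝ) (hr : 0 < r) (z : ↥(Mslice r)) : ↥S3c × (Fin 2 → ℂ) :=
  (⟨![z.1 0 / (rho z.1 : ℂ), z.1 1 / (rho z.1 : ℂ)], memS hr z⟩,
    ![((rho z.1 : ℝ) : ℂ) * z.1 2, ((rho z.1 : ℝ) : ℂ) * z.1 3])

def Gmap (r : ℝ) (hr : 0 < r) (p : ↥S3c × (Fin 2 → ℂ)) : ↥(Mslice r) :=
  ⟨![((sfun r p.2 : ℝ) : ℂ) * p.1.1 0, ((sfun r p.2 : ℝ) : ℂ) * p.1.1 1,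
     p.2 0 / ((sfun r p.2 : ℝ) : ℂ), p.2 1 / ((sfun r p.2 : ℝ) : ℂ)], memM hr p⟩

lemma key1 {r : ℝ} (hr : 0 < r) (z : ↥(Mslice r)) :
    sfun r (![((rho z.1 : ℝ) : ℂ) * z.1 2, ((rho z.1 : ℝ) : ℂ) * z.1 3]) = rho z.1 := by
  set v : Fin 2 → ℂ := ![((rho z.1 : ℝ) : ℂ) * z.1 2, ((rho z.1 : ℝ) : ℂ) * z.1 3] with hv
  have hρ := rho_pos hr z.2
  have hρ2 := rho_sq z.1
  have hz : ‖z.1 0‖ ^ 2 + ‖z.1 1‖ ^ 2 - ‖z.1 2‖ ^ 2 - ‖z.1 3‖ ^ 2 = r := z.2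
  have hs := sfun_pos hr v
  have hspec := sfun_spec hr v
  have hge := sfun_ge hr v
  have hv0 : ‖v 0‖ ^ 2 + ‖v 1‖ ^ 2 = rho z.1 ^ 2 * (‖z.1 2‖ ^ 2 + ‖z.1 3‖ ^ 2) := by
    rw [hv]
    simp only [Matrix.cons_val_zero, Matrix.cons_val_one, Matrix.head_cons, norm_mul,
      Complex.norm_real, Real.norm_of_nonneg hρ.le]
    ring
  have hsq : sfun r v ^ 2 = rho z.1 ^ 2 := by
    have hρspec : rho z.1 ^ 4 = r * rho z.1 ^ 2 + (‖v 0‖ ^ 2 + ‖v 1‖ ^ 2) := by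
      rw [hv0]
      nlinarith [hρ2, hz]
    nlinarith [hspec, hρspec, hs, hρ, hge, sq_nonneg (sfun r v - rho z.1),
      sq_nonneg (sfun r v + rho z.1)]
  calc sfun r v = Real.sqrt (sfun r v ^ 2) := (Real.sqrt_sq hs.le).symm
    _ = Real.sqrt (rho z.1 ^ 2) := by rw [hsq]
    _ = rho z.1 := Real.sqrt_sq hρ.le

lemma key2 {r : ℝ} (hr : 0 < r) (p : ↥S3c × (Fin 2 → ℂ)) :
    rho (![((sfun r p.2 : ℝ) : ℂ) * p.1.1 0, ((sfun r p.2 : ℝ) : ℂ) * p.1.1 1,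
      p.2 0 / ((sfun r p.2 : ℝ) : ℂ), p.2 1 / ((sfun r p.2 : ℝ) : ℂ)]) = sfun r p.2 := by
  have hs := sfun_pos hr p.2
  have hw : ‖p.1.1 0‖ ^ 2 + ‖p.1.1 1‖ ^ 2 = 1 := p.1.2
  unfold rho
  simp only [Matrix.cons_val_zero, Matrix.cons_val_one, Matrix.head_cons, norm_mul,
    Complex.norm_real, Real.norm_of_nonneg hs.le]
  rw [show (sfun r p.2 * ‖p.1.1 0‖) ^ 2 + (sfun r p.2 * ‖p.1.1 1‖) ^ 2 = sfun r p.2 ^ 2 by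
    nlinarith [hw]]
  exact Real.sqrt_sq hs.le

lemma left_inv' {r : ℝ} (hr : 0 < r) : Function.LeftInverse (Gmap r hr) (Fmap r hr) := by
  intro z
  have hρ := rho_pos hr z.2
  have hρne : ((rho z.1 : ℝ) : ℂ) ≠ 0 := Complex.ofReal_ne_zero.2 hρ.ne'
  have hk := key1 hr z
  apply Subtype.ext
  funext i
  fin_cases i <;>
    simp only [Gmap, Fmap, Matrix.cons_val_zero, Matrix.cons_val_one, Matrix.head_cons,
      Matrix.cons_val_two, Matrix.tail_cons, Matrix.cons_val_three, hk, Fin.isValue] <;>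
    field_simp <;> rfl

lemma right_inv' {r : ℝ} (hr : 0 < r) : Function.RightInverse (Gmap r hr) (Fmap r hr) := by
  intro p
  have hs := sfun_pos hr p.2
  have hsne : ((sfun r p.2 : ℝ) : ℂ) ≠ 0 := Complex.ofReal_ne_zero.2 hs.ne'
  have hk := key2 hr p
  apply Prod.ext
  · apply Subtype.ext
    funext i
    fin_cases i <;>
      simp only [Gmap, Fmap, Matrix.cons_val_zero, Matrix.cons_val_one, Matrix.head_cons,
        hk, Fin.isValue] <;>
      field_simp <;> rfl
  · funext i
    fin_cases i <;>
      simp only [Gmap, Fmap, Matrix.cons_val_zero, Matrix.cons_val_one, Matrix.head_cons,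
        Matrix.cons_val_two, Matrix.tail_cons, Matrix.cons_val_three, hk, Fin.isValue] <;>
      field_simp <;> rfl

lemma cont_rho : Continuous fun z : Fin 4 → ℂ => rho z := by
  unfold rho
  fun_prop

lemma cont_sfun (r : ℝ) : Continuous fun v : Fin 2 → ℂ => sfun r v := by
  unfold sfun
  fun_prop

lemma contF {r : ℝ} (hr : 0 < r) : Continuous (Fmap r hr) := by
  have hρc : Continuous fun z : ↥(Mslice r) => rho z.1 := cont_rho.comp continuous_subtype_val
  have hρcc : Continuous fun z : ↥(Mslice r) => ((rho z.1 : ℝ) : ℂ) :=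
    Complex.continuous_ofReal.comp hρc
  have hρne : ∀ z : ↥(Mslice r), ((rho z.1 : ℝ) : ℂ) ≠ 0 := fun z =>
    Complex.ofReal_ne_zero.2 (rho_pos hr z.2).ne'
  have hcoord : ∀ j : Fin 4, Continuous fun z : ↥(Mslice r) => z.1 j := fun j =>
    (continuous_apply j).comp continuous_subtype_val
  apply Continuous.prodMk
  · apply Continuous.subtype_mk
    apply continuous_pi
    intro i
    fin_cases i <;>
      simp only [Matrix.cons_val_zero, Matrix.cons_val_one, Matrix.head_cons, Fin.isValue]
    · exact (hcoord 0).div hρcc hρne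
    · exact (hcoord 1).div hρcc hρne
  · apply continuous_pi
    intro i
    fin_cases i <;>
      simp only [Matrix.cons_val_zero, Matrix.cons_val_one, Matrix.head_cons, Fin.isValue]
    · exact hρcc.mul (hcoord 2)
    · exact hρcc.mul (hcoord 3)

lemma contG {r : ℝ} (hr : 0 < r) : Continuous (Gmap r hr) := by
  have hsc : Continuous fun p : ↥S3c × (Fin 2 → ℂ) => sfun r p.2 :=
    (cont_sfun r).comp continuous_snd
  have hscc : Continuous fun p : ↥S3c × (Fin 2 → ℂ) => ((sfun r p.2 : ℝ) : ℂ) :=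
    Complex.continuous_ofReal.comp hsc
  have hsne : ∀ p : ↥S3c × (Fin 2 → ℂ), ((sfun r p.2 : ℝ) : ℂ) ≠ 0 := fun p =>
    Complex.ofReal_ne_zero.2 (sfun_pos hr p.2).ne'
  have hw : ∀ j : Fin 2, Continuous fun p : ↥S3c × (Fin 2 → ℂ) => p.1.1 j := fun j =>
    (continuous_apply j).comp (continuous_subtype_val.comp continuous_fst)
  have hv : ∀ j : Fin 2, Continuous fun p : ↥S3c × (Fin 2 → ℂ) => p.2 j := fun j =>
    (continuous_apply j).comp continuous_snd
  apply Continuous.subtype_mk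
  apply continuous_pi
  intro i
  fin_cases i <;>
    simp only [Matrix.cons_val_zero, Matrix.cons_val_one, Matrix.head_cons,
      Matrix.cons_val_two, Matrix.tail_cons, Matrix.cons_val_three, Fin.isValue]
  · exact hscc.mul (hw 0)
  · exact hscc.mul (hw 1)
  · exact (hv 0).div hscc hsne
  · exact (hv 1).div hscc hsne

def posHomeo (r : ℝ) (hr : 0 < r) : ↥(Mslice r) ≃ₜ (↥S3c × (Fin 2 → ℂ)) where
  toFun := Fmap r hr
  invFun := Gmap r hr
  left_inv := left_inv' hr
  right_inv := right_inv' hr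
  continuous_toFun := contF hr
  continuous_invFun := contG hr

lemma pos_case (r : ℝ) (hr : 0 < r) :
    ∃ h : ↥(Mslice r) ≃ₜ (↥S3c × (Fin 2 → ℂ)),
      ∀ z : ↥(Mslice r),
        ((h z).1 : Fin 2 → ℂ) =
          ![z.1 0 / (Real.sqrt (‖z.1 0‖ ^ 2 + ‖z.1 1‖ ^ 2) : ℂ),
            z.1 1 / (Real.sqrt (‖z.1 0‖ ^ 2 + ‖z.1 1‖ ^ 2) : ℂ)] ∧
        (h z).2 =
          ![(Real.sqrt (‖z.1 0‖ ^ 2 + ‖z.1 1‖ ^ 2) : ℂ) * z.1 2,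
            (Real.sqrt (‖z.1 0‖ ^ 2 + ‖z.1 1‖ ^ 2) : ℂ) * z.1 3] :=
  ⟨posHomeo r hr, fun _ => ⟨rfl, rfl⟩⟩

/-! Negative case via coordinate swap -/

def perm4 : Fin 4 → Fin 4 := ![2, 3, 0, 1]

lemma perm4_invol : ∀ i, perm4 (perm4 i) = i := by decide
lemma perm4_0 : perm4 0 = 2 := rfl
lemma perm4_1 : perm4 1 = 3 := rfl
lemma perm4_2 : perm4 2 = 0 := rfl
lemma perm4_3 : perm4 3 = 1 := rfl

lemma mem_swap {a : ℝ} {z : Fin 4 → ℂ} (hz : z ∈ Mslice a) :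
    (fun i => z (perm4 i)) ∈ Mslice (-a) := by
  have hz' : ‖z 0‖ ^ 2 + ‖z 1‖ ^ 2 - ‖z 2‖ ^ 2 - ‖z 3‖ ^ 2 = a := hz
  show ‖z (perm4 0)‖ ^ 2 + ‖z (perm4 1)‖ ^ 2 - ‖z (perm4 2)‖ ^ 2 - ‖z (perm4 3)‖ ^ 2 = -a
  rw [perm4_0, perm4_1, perm4_2, perm4_3]
  linarith

def negHomeo (r : ℝ) : ↥(Mslice (-r)) ≃ₜ ↥(Mslice r) where
  toFun z := ⟨fun i => z.1 (perm4 i), by have h := mem_swap z.2; rwa [neg_neg] at h⟩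
  invFun z := ⟨fun i => z.1 (perm4 i), mem_swap z.2⟩
  left_inv z := Subtype.ext (funext fun i => by simp [perm4_invol i])
  right_inv z := Subtype.ext (funext fun i => by simp [perm4_invol i])
  continuous_toFun := by
    have h : Continuous fun z : ↥(Mslice (-r)) => (fun i => z.1 (perm4 i) : Fin 4 → ℂ) :=
      continuous_pi fun i => (continuous_apply (perm4 i)).comp continuous_subtype_val
    exact h.subtype_mk _
  continuous_invFun := by
    have h : Continuous fun z : ↥(Mslice r) => (fun i => z.1 (perm4 i) : Fin 4 → ℂ) :=
      continuous_pi fun i => (continuous_apply (perm4 i)).comp continuous_subtype_val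
    exact h.subtype_mk _

end AuxStmt12

end


theorem stmt12 (r : ℝ) (hr : 0 < r) :
    (∃ h : ↥(Mslice r) ≃ₜ (↥S3c × (Fin 2 → ℂ)),
      ∀ z : ↥(Mslice r),
        ((h z).1 : Fin 2 → ℂ) =
          ![z.1 0 / (Real.sqrt (‖z.1 0‖ ^ 2 + ‖z.1 1‖ ^ 2) : ℂ),
            z.1 1 / (Real.sqrt (‖z.1 0‖ ^ 2 + ‖z.1 1‖ ^ 2) : ℂ)] ∧
        (h z).2 =
          ![(Real.sqrt (‖z.1 0‖ ^ 2 + ‖z.1 1‖ ^ 2) : ℂ) * z.1 2,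
            (Real.sqrt (‖z.1 0‖ ^ 2 + ‖z.1 1‖ ^ 2) : ℂ) * z.1 3]) ∧
    (∃ h : ↥(Mslice (-r)) ≃ₜ ((Fin 2 → ℂ) × ↥S3c),
      ∀ z : ↥(Mslice (-r)),
        (h z).1 =
          ![(Real.sqrt (‖z.1 2‖ ^ 2 + ‖z.1 3‖ ^ 2) : ℂ) * z.1 0,
            (Real.sqrt (‖z.1 2‖ ^ 2 + ‖z.1 3‖ ^ 2) : ℂ) * z.1 1] ∧
        ((h z).2 : Fin 2 → ℂ) =
          ![z.1 2 / (Real.sqrt (‖z.1 2‖ ^ 2 + ‖z.1 3‖ ^ 2) : ℂ),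
            z.1 3 / (Real.sqrt (‖z.1 2‖ ^ 2 + ‖z.1 3‖ ^ 2) : ℂ)]) := by


  constructor
  · exact AuxStmt12.pos_case r hr
  · refine ⟨(AuxStmt12.negHomeo r).trans ((AuxStmt12.posHomeo r hr).trans
      (Homeomorph.prodComm _ _)), fun z => ?_⟩
    constructor
    · funext i; fin_cases i <;> rfl
    · funext i; fin_cases i <;> rfl
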